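/- Every element x of a finite subgroup G of GL_2(ℝ) with rational trace and determinant has order 1, 2, 3, 4, or 6, and its characteristic polynomial is one of (T-1)^2, (T+1)^2, T^2-1, T^2+1, T^2+T+1, T^2-T+1. -/

import Mathlib

open Polynomial Matrix

lemma charpoly_fin_two' {R : Type*} [CommRing R] (M : Matrix (Fin 2) (Fin 2) R) :
    M.charpoly = X ^ 2 - C (M.trace) * X + C M.det := by
  rw [Matrix.charpoly, Matrix.det_fin_two, Matrix.charmatrix_apply_eq,
    Matrix.charmatrix_apply_eq, Matrix.charmatrix_apply_ne _ _ _ (by decide),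
    Matrix.charmatrix_apply_ne _ _ _ (by decide), Matrix.trace_fin_two, Matrix.det_fin_two]
  simp only [map_add, _root_.map_mul, map_sub, map_neg]
  ring

lemma eval_charpoly' {K : Type*} [Field K] {m : Type*} [Fintype m] [DecidableEq m]
    (M : Matrix m m K) (lam : K) :
    (M.charpoly).eval lam = (lam • (1 : Matrix m m K) - M).det := by
  rw [Matrix.charpoly, ← Polynomial.coe_evalRingHom, RingHom.map_det]
  congr 1
  ext i j
  by_cases h : i = j
  · subst h; simp [charmatrix_apply_eq]
  · simp [charmatrix_apply_ne _ _ _ h, Matrix.one_apply_ne h]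

lemma root_pow_eq_one {K : Type*} [Field K] {m : Type*} [Fintype m] [DecidableEq m]
    {n : ℕ} (M : Matrix m m K) (hM : M ^ n = 1)
    {lam : K} (h : (M.charpoly).eval lam = 0) : lam ^ n = 1 := by
  rw [eval_charpoly'] at h
  obtain ⟨v, hv0, hv⟩ := (Matrix.exists_mulVec_eq_zero_iff).2 h
  have hMv : M *ᵥ v = lam • v := by
    rw [Matrix.sub_mulVec, sub_eq_zero, Matrix.smul_mulVec, Matrix.one_mulVec] at hv
    exact hv.symm
  have key : ∀ k : ℕ, (M ^ k) *ᵥ v = lam ^ k • v := by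
    intro k
    induction k with
    | zero => simp
    | succ k ih =>
      rw [pow_succ, ← Matrix.mulVec_mulVec, hMv, Matrix.mulVec_smul, ih,
        smul_smul, pow_succ]
      ring_nf
  have hkey := key n
  rw [hM, Matrix.one_mulVec] at hkey
  obtain ⟨i, hi⟩ := Function.ne_iff.1 hv0
  have hvi : (lam ^ n) * v i = v i := by
    conv_rhs => rw [hkey]
    simp [Pi.smul_apply]
  have hz : (lam ^ n - 1) * v i = 0 := by ring_nf; linear_combination hvi
  rcases mul_eq_zero.1 hz with h1 | h2
  · exact sub_eq_zero.1 h1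
  · exact absurd h2 (by simpa using hi)

lemma trace_det_cases {M : Matrix (Fin 2) (Fin 2) ℝ} {n : ℕ} (hn : n ≠ 0) (hMn : M ^ n = 1)
    (q : ℚ) (hq : M.trace = (q : ℝ)) :
    (M.trace = 2 ∧ M.det = 1) ∨ (M.trace = -2 ∧ M.det = 1) ∨ (M.trace = 0 ∧ M.det = -1) ∨
    (M.trace = 0 ∧ M.det = 1) ∨ (M.trace = -1 ∧ M.det = 1) ∨ (M.trace = 1 ∧ M.det = 1) := by
  set T : ℝ := M.trace with hT
  set D : ℝ := M.det with hD
  set N : Matrix (Fin 2) (Fin 2) ℂ := M.map Complex.ofReal with hN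
  have hmap : N = Complex.ofRealHom.mapMatrix M := rfl
  have hNn : N ^ n = 1 := by rw [hmap, ← map_pow, hMn, _root_.map_one]
  have htrN : N.trace = (T : ℂ) := by simp [hN, Matrix.trace, Matrix.map_apply, hT]
  have hdetN : N.det = (D : ℂ) := by rw [hmap, ← RingHom.map_det]; rfl
  have hcp : N.charpoly = X ^ 2 - C (T : ℂ) * X + C (D : ℂ) := by
    rw [charpoly_fin_two', htrN, hdetN]
  -- get a root
  have hdeg : 0 < N.charpoly.degree := by
    rw [Matrix.charpoly_degree_eq_dim]
    simp
  obtain ⟨lam, hlam⟩ := Complex.exists_root hdeg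
  have E : lam ^ 2 - (T : ℂ) * lam + (D : ℂ) = 0 := by
    have := hlam
    rw [IsRoot.def, hcp] at this
    simpa using this
  set mu : ℂ := (T : ℂ) - lam with hmu
  have Emu : mu ^ 2 - (T : ℂ) * mu + (D : ℂ) = 0 := by
    rw [hmu]; linear_combination E
  have hlamn : lam ^ n = 1 := by
    apply root_pow_eq_one N hNn
    rw [hcp]; simpa using E
  have hmun : mu ^ n = 1 := by
    apply root_pow_eq_one N hNn
    rw [hcp]; simpa using Emu
  by_cases him : lam.im = 0
  · -- real eigenvalues
    have hlre : lam = ((lam.re : ℝ) : ℂ) := Complex.ext (by simp) (by simp [him])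
    set a : ℝ := lam.re with ha
    have han : a ^ n = 1 := by
      have : ((a ^ n : ℝ) : ℂ) = ((1 : ℝ) : ℂ) := by push_cast; rw [← hlre]; exact hlamn
      exact_mod_cast this
    have ha1 : a = 1 ∨ a = -1 := by
      rcases (pow_eq_one_iff_of_ne_zero hn).1 han with h | h
      · exact Or.inl h
      · exact Or.inr h.1
    set b : ℝ := T - a with hb
    have hmub : mu = ((b : ℝ) : ℂ) := by rw [hmu, hb, hlre]; push_cast; ring
    have hbn : b ^ n = 1 := by
      have : ((b ^ n : ℝ) : ℂ) = ((1 : ℝ) : ℂ) := by push_cast; rw [← hmub]; exact hmun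
      exact_mod_cast this
    have hb1 : b = 1 ∨ b = -1 := by
      rcases (pow_eq_one_iff_of_ne_zero hn).1 hbn with h | h
      · exact Or.inl h
      · exact Or.inr h.1
    have hTr : T = a + b := by rw [hb]; ring
    have hDr : D = a * b := by
      have E' : (((a ^ 2 - T * a + D : ℝ)) : ℂ) = 0 := by push_cast; rw [← hlre]; exact E
      have : a ^ 2 - T * a + D = 0 := by exact_mod_cast E'
      rw [hb]; nlinarith [this]
    rcases ha1 with h' | h' <;> rcases hb1 with h | h <;> rw [h', h] at hTr hDr <;> norm_num at hTr hDr ⊢ <;> tauto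
  · -- complex conjugate eigenvalues
    have Ec : (starRingEnd ℂ) lam ^ 2 - (T : ℂ) * (starRingEnd ℂ) lam + (D : ℂ) = 0 := by
      have := congrArg (starRingEnd ℂ) E
      simpa [map_sub, map_add, _root_.map_mul, map_pow, Complex.conj_ofReal] using this
    have hcne : (starRingEnd ℂ) lam ≠ lam :=
      fun h => him (Complex.conj_eq_iff_im.1 h)
    have hcmu : (starRingEnd ℂ) lam = mu := by
      have hfac : ((starRingEnd ℂ) lam - lam) * ((starRingEnd ℂ) lam + lam - (T : ℂ)) = 0 := by
        linear_combination Ec - E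
      rcases mul_eq_zero.1 hfac with h | h
      · exact absurd (sub_eq_zero.1 h) hcne
      · rw [hmu]; linear_combination h
    -- D = 1
    have habs : ‖lam‖ = 1 := by
      have : ‖lam‖ ^ n = 1 := by
        rw [← norm_pow, hlamn, norm_one]
      rcases (pow_eq_one_iff_of_ne_zero hn).1 this with h | h
      · exact h
      · nlinarith [norm_nonneg lam, h.1]
    have hns : Complex.normSq lam = 1 := by
      have := Complex.sq_norm lam
      rw [habs] at this
      simpa using this.symm
    have hD1 : D = 1 := by
      have h1 : lam * mu = (D : ℂ) := by rw [hmu]; linear_combination -E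
      rw [← hcmu, Complex.mul_conj, hns] at h1
      exact_mod_cast h1.symm
    have hT2 : T = 2 * lam.re := by
      have h1 : (T : ℂ) = lam + (starRingEnd ℂ) lam := by rw [hcmu, hmu]; ring
      rw [Complex.add_conj] at h1
      exact_mod_cast h1
    have hTlt : |T| < 2 := by
      have h2 : lam.re ^ 2 + lam.im ^ 2 = 1 := by
        rw [← hns]; simp [Complex.normSq_apply]; ring
      have h3 : lam.im ^ 2 > 0 := by positivity
      rw [abs_lt, hT2]
      constructor <;> nlinarith
    -- integrality of T
    have hint1 : IsIntegral ℤ lam := by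
      refine ⟨X ^ n - 1, by simpa using monic_X_pow_sub_C (1 : ℤ) hn, ?_⟩
      rw [eval₂_sub, eval₂_X_pow, eval₂_one, hlamn, sub_self]
    have hint2 : IsIntegral ℤ mu := by
      refine ⟨X ^ n - 1, by simpa using monic_X_pow_sub_C (1 : ℤ) hn, ?_⟩
      rw [eval₂_sub, eval₂_X_pow, eval₂_one, hmun, sub_self]
    have hintT : IsIntegral ℤ ((T : ℂ)) := by
      have : (T : ℂ) = lam + mu := by rw [hmu]; ring
      rw [this]
      exact hint1.add hint2
    have hintq : IsIntegral ℤ (q : ℚ) := by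
      have heq : (algebraMap ℚ ℂ).toIntAlgHom q = (T : ℂ) := by
        have : (algebraMap ℚ ℂ) q = ((q : ℚ) : ℂ) := eq_ratCast _ q
        rw [hq]
        push_cast
        exact this
      rw [← isIntegral_algHom_iff (algebraMap ℚ ℂ).toIntAlgHom
        (fun a b hab => (algebraMap ℚ ℂ).injective hab), heq]
      exact hintT
    obtain ⟨z, hz⟩ := IsIntegrallyClosed.isIntegral_iff.mp hintq
    have hzq : ((z : ℤ) : ℚ) = q := by rw [← hz]; simp
    have hTz : T = (z : ℝ) := by rw [hq, ← hzq]; push_cast; ring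
    have hzb : z = 0 ∨ z = 1 ∨ z = -1 := by
      have h3 : |(z : ℝ)| < 2 := hTz ▸ hTlt
      have h4 : ((|z| : ℤ) : ℝ) < 2 := by push_cast; exact_mod_cast h3
      have h5 : |z| < 2 := by exact_mod_cast h4
      have h6 := abs_lt.mp h5
      omega
    rcases hzb with h | h | h <;> rw [h] at hTz <;> norm_num at hTz <;>
      simp [hTz, hD1]

/-- If `(A - 1)^2 = 0` and some positive power of `A` is `1`, then `A = 1`. -/
lemma eq_one_of_unipotent (A : Matrix (Fin 2) (Fin 2) ℝ) (h : (A - 1) ^ 2 = 0)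
    {m : ℕ} (hm : m ≠ 0) (hA : A ^ m = 1) : A = 1 := by
  have h2 : A * A = (2 : ℝ) • A - 1 := by
    have h' : A * A - (2:ℝ) • A + 1 = 0 := by
      rw [← h]; push_cast [two_smul]; noncomm_ring
    linear_combination (norm := noncomm_ring) h'
  have key : ∀ k : ℕ, A ^ k = (k : ℝ) • A - ((k : ℝ) - 1) • 1 := by
    intro k
    induction k with
    | zero => simp
    | succ k ih =>
      rw [pow_succ, ih, sub_mul, smul_mul_assoc, smul_mul_assoc, one_mul, h2]
      push_cast
      match_scalars <;> ring
  have hk := key m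
  rw [hA] at hk
  have h3 : (m : ℝ) • A = (m : ℝ) • (1 : Matrix (Fin 2) (Fin 2) ℝ) := by
    rw [eq_sub_iff_add_eq] at hk
    rw [← hk]
    match_scalars <;> ring
  exact smul_right_injective _ (Nat.cast_ne_zero.2 hm) h3

lemma mem_of_dvd_small {k K : ℕ} (hK : K = 1 ∨ K = 2 ∨ K = 3 ∨ K = 4 ∨ K = 6) (h : k ∣ K) :
    k ∈ ({1, 2, 3, 4, 6} : Set ℕ) := by
  have hKpos : 0 < K := by rcases hK with rfl|rfl|rfl|rfl|rfl <;> norm_num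
  have hkle := Nat.le_of_dvd hKpos h
  simp only [Set.mem_insert_iff, Set.mem_singleton_iff]
  rcases hK with rfl|rfl|rfl|rfl|rfl <;> interval_cases k <;> revert h <;> decide

/-- Every element `x` of a finite subgroup `G` of `GL₂(ℝ)` with rational trace
and determinant has order `1, 2, 3, 4,` or `6`, and its characteristic polynomial is one of
`(T-1)², (T+1)², T²-1, T²+1, T²+T+1, T²-T+1`. -/
theorem order_and_charpoly_of_finite_subgroup_GL2R
    (G : Subgroup (Matrix.GeneralLinearGroup (Fin 2) ℝ)) (hG : Finite G)
    (htr : ∀ x ∈ G, ∃ q : ℚ, Matrix.trace (x : Matrix (Fin 2) (Fin 2) ℝ) = (q : ℝ))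
    (hdet : ∀ x ∈ G, ∃ q : ℚ, (x : Matrix (Fin 2) (Fin 2) ℝ).det = (q : ℝ))
    (x : Matrix.GeneralLinearGroup (Fin 2) ℝ) (hx : x ∈ G) :
    orderOf x ∈ ({1, 2, 3, 4, 6} : Set ℕ) ∧
      (x : Matrix (Fin 2) (Fin 2) ℝ).charpoly ∈
        ({(Polynomial.X - 1) ^ 2, (Polynomial.X + 1) ^ 2,
          Polynomial.X ^ 2 - 1, Polynomial.X ^ 2 + 1,
          Polynomial.X ^ 2 + Polynomial.X + 1,
          Polynomial.X ^ 2 - Polynomial.X + 1} : Set (Polynomial ℝ)) := by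
  haveI := hG
  set M : Matrix (Fin 2) (Fin 2) ℝ := (x : Matrix (Fin 2) (Fin 2) ℝ) with hMdef
  have hnpos : 0 < orderOf x := by
    have := orderOf_pos (⟨x, hx⟩ : G)
    rwa [Subgroup.orderOf_mk] at this
  have hxn : x ^ orderOf x = 1 := pow_orderOf_eq_one x
  have hMn : M ^ orderOf x = 1 := by
    rw [hMdef, ← Units.val_pow_eq_pow_val, hxn, Units.val_one]
  obtain ⟨q, hq⟩ := htr x hx
  have hcases := trace_det_cases hnpos.ne' hMn q hq
  have hcp := charpoly_fin_two' M
  have hCH := Matrix.aeval_self_charpoly M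
  have hxpow : ∀ k : ℕ, M ^ k = 1 → x ^ k = 1 := by
    intro k hk
    refine Units.ext ?_
    rw [Units.val_pow_eq_pow_val, Units.val_one]
    exact hk
  rcases hcases with ⟨hT, hD⟩ | ⟨hT, hD⟩ | ⟨hT, hD⟩ | ⟨hT, hD⟩ | ⟨hT, hD⟩ | ⟨hT, hD⟩
  · -- T = 2, D = 1 : charpoly (X-1)^2, x = 1
    have hcp1 : M.charpoly = (X - 1) ^ 2 := by
      rw [hcp, hT, hD]; simp only [Polynomial.C_1, map_ofNat]; ring
    rw [hcp1] at hCH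
    have hCH1 : (M - 1) ^ 2 = 0 := by
      simpa using hCH
    have hM1 : M = 1 := eq_one_of_unipotent M hCH1 hnpos.ne' hMn
    have hx1 : x = 1 := by
      have := hxpow 1 (by simpa using hM1)
      simpa using this
    constructor
    · rw [show x = 1 from hx1, orderOf_one]
      simp
    · rw [hcp1]
      simp
  · -- T = -2, D = 1 : charpoly (X+1)^2, x = -1
    have hcp1 : M.charpoly = (X + 1) ^ 2 := by
      rw [hcp, hT, hD]; simp only [Polynomial.C_1, map_neg, map_ofNat]; ring
    rw [hcp1] at hCH
    have hCH1 : (M + 1) ^ 2 = 0 := by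
      simpa using hCH
    have hCH2 : (-M - 1) ^ 2 = 0 := by
      rw [show (-M - 1 : Matrix (Fin 2) (Fin 2) ℝ) = -(M + 1) by noncomm_ring, neg_sq]
      exact hCH1
    have h2n : (-M) ^ (2 * orderOf x) = 1 := by
      rw [pow_mul, neg_sq, ← pow_mul, mul_comm 2 (orderOf x), pow_mul, hMn, one_pow]
    have hM1 : -M = 1 := eq_one_of_unipotent (-M) hCH2
      (by positivity) h2n
    have hMneg : M = -1 := neg_eq_iff_eq_neg.mp hM1
    have hMsq : M ^ 2 = 1 := by rw [hMneg]; exact neg_one_sq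
    have hx2 : x ^ 2 = 1 := hxpow 2 hMsq
    constructor
    · exact mem_of_dvd_small (by norm_num) (orderOf_dvd_of_pow_eq_one hx2)
    · rw [hcp1]
      simp
  · -- T = 0, D = -1 : charpoly X^2 - 1
    have hcp1 : M.charpoly = X ^ 2 - 1 := by
      rw [hcp, hT, hD]; simp only [Polynomial.C_1, map_zero, map_neg]; ring
    rw [hcp1] at hCH
    have hMsq : M ^ 2 = 1 := by
      have : M ^ 2 - 1 = 0 := by simpa using hCH
      rwa [sub_eq_zero] at this
    have hx2 : x ^ 2 = 1 := hxpow 2 hMsq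
    constructor
    · exact mem_of_dvd_small (by norm_num) (orderOf_dvd_of_pow_eq_one hx2)
    · rw [hcp1]
      simp
  · -- T = 0, D = 1 : charpoly X^2 + 1
    have hcp1 : M.charpoly = X ^ 2 + 1 := by
      rw [hcp, hT, hD]; simp only [Polynomial.C_1, map_zero]; ring
    rw [hcp1] at hCH
    have hMsq : M ^ 2 = -1 := by
      have h' : M ^ 2 + 1 = 0 := by simpa using hCH
      exact eq_neg_of_add_eq_zero_left h'
    have hM4 : M ^ 4 = 1 := by
      rw [show (4 : ℕ) = 2 * 2 by norm_num, pow_mul, hMsq]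
      simp
    have hx4 : x ^ 4 = 1 := hxpow 4 hM4
    constructor
    · exact mem_of_dvd_small (by norm_num) (orderOf_dvd_of_pow_eq_one hx4)
    · rw [hcp1]
      simp
  · -- T = -1, D = 1 : charpoly X^2 + X + 1
    have hcp1 : M.charpoly = X ^ 2 + X + 1 := by
      rw [hcp, hT, hD]; simp only [Polynomial.C_1, map_neg]; ring
    rw [hcp1] at hCH
    have hCH1 : M ^ 2 + M + 1 = 0 := by simpa using hCH
    have h2 : M ^ 2 = -M - 1 := by
      have h' : M ^ 2 - (-M - 1) = 0 := by rw [← hCH1]; noncomm_ring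
      exact sub_eq_zero.mp h'
    have hM3 : M ^ 3 = 1 := by
      calc M ^ 3 = M ^ 2 * M := by rw [pow_succ]
        _ = (-M - 1) * M := by rw [h2]
        _ = -(M ^ 2) - M := by noncomm_ring
        _ = -(-M - 1) - M := by rw [h2]
        _ = 1 := by noncomm_ring
    have hx3 : x ^ 3 = 1 := hxpow 3 hM3
    constructor
    · exact mem_of_dvd_small (by norm_num) (orderOf_dvd_of_pow_eq_one hx3)
    · rw [hcp1]
      simp
  · -- T = 1, D = 1 : charpoly X^2 - X + 1
    have hcp1 : M.charpoly = X ^ 2 - X + 1 := by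
      rw [hcp, hT, hD]; simp only [Polynomial.C_1]; ring
    rw [hcp1] at hCH
    have hCH1 : M ^ 2 - M + 1 = 0 := by simpa using hCH
    have h2 : M ^ 2 = M - 1 := by
      have h' : M ^ 2 - (M - 1) = 0 := by rw [← hCH1]; noncomm_ring
      exact sub_eq_zero.mp h'
    have hM3 : M ^ 3 = -1 := by
      calc M ^ 3 = M ^ 2 * M := by rw [pow_succ]
        _ = (M - 1) * M := by rw [h2]
        _ = M ^ 2 - M := by noncomm_ring
        _ = (M - 1) - M := by rw [h2]
        _ = -1 := by noncomm_ring
    have hM6 : M ^ 6 = 1 := by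
      rw [show (6 : ℕ) = 3 * 2 by norm_num, pow_mul, hM3]
      simp
    have hx6 : x ^ 6 = 1 := hxpow 6 hM6
    constructor
    · exact mem_of_dvd_small (by norm_num) (orderOf_dvd_of_pow_eq_one hx6)
    · rw [hcp1]
      simp
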